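/- Let X = {x_v : v ∈ V} ∪ {z_P : P ∈ 𝒫} be variables and C = {c_P : P ∈ 𝒫} constraints of the SGSP integer program on a tree G = (V,E), where each penalty subgraph P ∈ 𝒫 induces a connected subtree of G and each vertex v lies in at most Φ penalty subgraphs. Then the constraint (bipartite incidence) graph of this program has tree-width at most Φ. -/

import Mathlib

set_option linter.unnecessarySimpa false

open SimpleGraph Sum

section Aux

variable {V P : Type} {G : SimpleGraph V} {ch : P → V}

/-- Relation generating the decomposition tree: `G` on the left summand plus a
pendant edge from each `p : P` to its chosen vertex `ch p`. -/
def trRel (G : SimpleGraph V) (ch : P → V) : V ⊕ P → V ⊕ P → Prop := fun x y =>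
  Sum.elim (fun u => Sum.elim (fun v => G.Adj u v) (fun p => u = ch p) y) (fun _ => False) x

/-- The decomposition tree graph. -/
def trG (G : SimpleGraph V) (ch : P → V) : SimpleGraph (V ⊕ P) :=
  SimpleGraph.fromRel (trRel G ch)

lemma trG_adj_inl_inl {u v : V} : (trG G ch).Adj (inl u) (inl v) ↔ G.Adj u v := by
  simp only [trG, fromRel_adj]
  constructor
  · rintro ⟨hne, h | h⟩
    · exact h
    · exact h.symm
  · intro h
    exact ⟨by simpa using h.ne, Or.inl h⟩

lemma trG_adj_inr {x : V ⊕ P} {p : P} : (trG G ch).Adj x (inr p) ↔ x = inl (ch p) := by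
  simp only [trG, fromRel_adj]
  constructor
  · rintro ⟨hne, h | h⟩
    · cases x with
      | inl v => exact congrArg _ h
      | inr q => exact h.elim
    · cases x with
      | inl v => exact h.elim
      | inr q => exact h.elim
  · rintro rfl
    exact ⟨by simp, Or.inl rfl⟩

lemma trG_connected (hG : G.Connected) : (trG G ch).Connected := by
  have hV : Nonempty V := hG.nonempty
  rw [connected_iff]
  have hl : ∀ u v : V, (trG G ch).Reachable (inl u) (inl v) := by
    intro u v
    obtain ⟨w⟩ := hG.preconnected u v
    exact ⟨w.map ⟨inl, fun h => trG_adj_inl_inl.2 h⟩⟩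
  have hr : ∀ p : P, (trG G ch).Reachable (inl (ch p)) (inr p) :=
    fun p => (trG_adj_inr.2 rfl).reachable
  refine ⟨?_, ⟨inl hV.some⟩⟩
  intro x y
  cases x with
  | inl u =>
    cases y with
    | inl v => exact hl u v
    | inr p => exact (hl u (ch p)).trans (hr p)
  | inr q =>
    cases y with
    | inl v => exact ((hr q).symm.trans (hl (ch q) v))
    | inr p => exact ((hr q).symm.trans (hl (ch q) (ch p))).trans (hr p)

lemma proj_walk {x y : V ⊕ P} (w : (trG G ch).Walk x y) :
    (∀ s ∈ w.support, ∃ v : V, s = inl v) →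
    ∀ (a b : V), x = inl a → y = inl b →
    ∃ w' : G.Walk a b, w'.support.map inl = w.support ∧
      w'.edges.map (Sym2.map inl) = w.edges := by
  induction w with
  | nil =>
    rintro _ a b rfl hb
    obtain rfl : a = b := inl.inj hb
    exact ⟨Walk.nil, by simp, by simp⟩
  | @cons u c y h q ih =>
    rintro hs a b rfl hb
    obtain ⟨c', rfl⟩ := hs c (by simp [q.start_mem_support])
    have ha : G.Adj a c' := trG_adj_inl_inl.1 h
    obtain ⟨w', hsup, hedg⟩ := ih (fun s hs' => hs s (by simp [hs'])) c' b rfl hb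
    exact ⟨Walk.cons ha w', by simp [hsup], by simp [hedg]⟩

lemma trG_acyclic (hG : G.IsTree) : (trG G ch).IsAcyclic := by
  classical
  intro x c hc
  rcases Classical.em (∀ s ∈ c.support, ∃ v : V, s = inl v) with hsupp | hsupp
  · obtain ⟨a, rfl⟩ := hsupp x c.start_mem_support
    obtain ⟨w', hsup, hedg⟩ := proj_walk c hsupp a a rfl rfl
    have h3 := hc.three_le_length
    have hlen : w'.length = c.length := by
      rw [← Walk.length_edges, ← Walk.length_edges, ← hedg, List.length_map]
    refine ((isTree_iff G).mp hG).2 w' ?_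
    rw [Walk.isCycle_def] at hc ⊢
    obtain ⟨ht, hnn, hnd⟩ := hc
    refine ⟨?_, ?_, ?_⟩
    · rw [Walk.isTrail_def] at ht ⊢
      rw [← hedg] at ht
      exact ht.of_map
    · intro hnil
      rw [hnil] at hlen
      simp at hlen
      omega
    · rw [← hsup, ← List.map_tail] at hnd
      exact hnd.of_map
  · push_neg at hsupp
    obtain ⟨s, hsmem, hsnl⟩ := hsupp
    have hp : ∃ p : P, s = inr p := by
      cases s with
      | inl v => exact (hsnl v rfl).elim
      | inr p => exact ⟨p, rfl⟩
    obtain ⟨p, rfl⟩ := hp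
    have hc' := hc.rotate hsmem
    set c' := c.rotate _ hsmem with hc'def
    obtain ⟨b, hadj, q, hq⟩ := SimpleGraph.Walk.not_nil_iff.mp hc'.not_nil
    obtain rfl : b = inl (ch p) := trG_adj_inr.1 hadj.symm
    rw [hq, Walk.cons_isCycle_iff] at hc'
    obtain ⟨hqp, hne⟩ := hc'
    apply hne
    obtain ⟨b', hadj', r, hr⟩ := Walk.exists_eq_cons_of_ne (by simp) q.reverse
    obtain rfl : b' = inl (ch p) := trG_adj_inr.1 hadj'.symm
    have hmem : s(Sum.inr p, Sum.inl (ch p)) ∈ q.reverse.edges := by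
      rw [hr]; simp
    rwa [Walk.edges_reverse, List.mem_reverse] at hmem

lemma trG_isTree (hG : G.IsTree) : (trG G ch).IsTree :=
  (isTree_iff _).mpr ⟨trG_connected ((isTree_iff G).mp hG).1, trG_acyclic hG⟩

end Aux

section Bags

variable {V P : Type} [DecidableEq V] [DecidableEq P] [Fintype P]

/-- The bags of the tree decomposition. -/
def bags (Vp : P → Finset V) : V ⊕ P → Finset ((V ⊕ P) ⊕ P) :=
  Sum.elim
    (fun v => insert (Sum.inl (Sum.inl v))
      ((Finset.univ.filter (fun p => v ∈ Vp p)).image Sum.inr))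
    (fun p => {Sum.inl (Sum.inr p), Sum.inr p})

lemma mem_bags_xv {Vp : P → Finset V} {v : V} {t : V ⊕ P} :
    Sum.inl (Sum.inl v) ∈ bags Vp t ↔ t = Sum.inl v := by
  cases t <;> simp [bags, eq_comm]

lemma mem_bags_zp {Vp : P → Finset V} {q : P} {t : V ⊕ P} :
    Sum.inl (Sum.inr q) ∈ bags Vp t ↔ t = Sum.inr q := by
  cases t <;> simp [bags, eq_comm]

lemma mem_bags_cp {Vp : P → Finset V} {p : P} {t : V ⊕ P} :
    Sum.inr p ∈ bags Vp t ↔ ((∃ v, t = Sum.inl v ∧ v ∈ Vp p) ∨ t = Sum.inr p) := by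
  cases t <;> simp [bags, eq_comm]

end Bags



/-- A tree decomposition of a graph `G` with tree-index type `ι`. -/
structure TreeDecomposition {V : Type} (G : SimpleGraph V) (ι : Type) where
  tree : SimpleGraph ι
  isTree : tree.IsTree
  bag : ι → Finset V
  covers : ∀ v : V, ∃ t, v ∈ bag t
  coversEdge : ∀ {u v : V}, G.Adj u v → ∃ t, u ∈ bag t ∧ v ∈ bag t
  pathCond : ∀ (v : V) {t₁ t₂ : ι}, v ∈ bag t₁ → v ∈ bag t₂ →
    ∀ (p : tree.Walk t₁ t₂), p.IsPath → ∀ s ∈ p.support, v ∈ bag s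

/-- for the SGSP integer program on a tree `G`, with connected
penalty subtrees `Vp p` each vertex lying in at most `Φ` of them, the
constraint (bipartite incidence) graph — variables `x_v` (`Sum.inl (Sum.inl v)`)
and `z_P` (`Sum.inl (Sum.inr P)`), constraints `c_P` (`Sum.inr P`) — has
tree-width at most `Φ`. -/
theorem stmt13 {V P : Type} [Fintype V] [DecidableEq V] [Fintype P]
    (G : SimpleGraph V) (hG : G.IsTree)
    (Vp : P → Finset V)
    (hconn : ∀ p, (G.induce (↑(Vp p) : Set V)).Connected)
    (Φ : ℕ)
    (hfreq : ∀ v : V, (Finset.univ.filter (fun p => v ∈ Vp p)).card ≤ Φ) :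
    ∃ (ι : Type) (D : TreeDecomposition
        (SimpleGraph.fromRel (fun x y : (V ⊕ P) ⊕ P =>
          match x, y with
          | Sum.inl (Sum.inl v), Sum.inr p => v ∈ Vp p
          | Sum.inl (Sum.inr q), Sum.inr p => q = p
          | _, _ => False)) ι),
      ∀ t, (D.bag t).card ≤ Φ + 1 := by
  classical
  have hne : ∀ p, ∃ v, v ∈ Vp p := by
    intro p
    obtain ⟨⟨v, hv⟩⟩ := (hconn p).nonempty
    exact ⟨v, by simpa using hv⟩
  choose ch hch using hne
  have hpend : ∀ p : P, (trG G ch).Adj (Sum.inl (ch p)) (Sum.inr p) := fun p => trG_adj_inr.2 rfl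
  refine ⟨V ⊕ P, ⟨trG G ch, trG_isTree hG, bags Vp, ?_, ?_, ?_⟩, ?_⟩
  · -- covers
    rintro ((v | q) | p)
    · exact ⟨Sum.inl v, mem_bags_xv.2 rfl⟩
    · exact ⟨Sum.inr q, mem_bags_zp.2 rfl⟩
    · exact ⟨Sum.inr p, mem_bags_cp.2 (Or.inr rfl)⟩
  · -- coversEdge
    intro u v h
    rw [SimpleGraph.fromRel_adj] at h
    have key : ∀ a b : (V ⊕ P) ⊕ P,
        (match a, b with
          | Sum.inl (Sum.inl v), Sum.inr p => v ∈ Vp p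
          | Sum.inl (Sum.inr q), Sum.inr p => q = p
          | _, _ => False) → ∃ t, a ∈ bags Vp t ∧ b ∈ bags Vp t := by
      rintro ((a | a) | a) ((b | b) | b) hr <;> try exact hr.elim
      · exact ⟨Sum.inl a, mem_bags_xv.2 rfl, mem_bags_cp.2 (Or.inl ⟨a, rfl, hr⟩)⟩
      · obtain rfl : a = b := hr
        exact ⟨Sum.inr a, mem_bags_zp.2 rfl, mem_bags_cp.2 (Or.inr rfl)⟩
    obtain ⟨-, h | h⟩ := h
    · exact key _ _ h
    · obtain ⟨t, h1, h2⟩ := key _ _ h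
      exact ⟨t, h2, h1⟩
  · -- pathCond
    rintro ((v | q) | p) t₁ t₂ h₁ h₂ pth hpth s hs
    · rw [mem_bags_xv] at h₁ h₂
      subst h₁; subst h₂
      rw [Walk.isPath_iff_eq_nil] at hpth
      subst hpth
      simp only [Walk.support_nil, List.mem_singleton] at hs
      subst hs
      exact mem_bags_xv.2 rfl
    · rw [mem_bags_zp] at h₁ h₂
      subst h₁; subst h₂
      rw [Walk.isPath_iff_eq_nil] at hpth
      subst hpth
      simp only [Walk.support_nil, List.mem_singleton] at hs
      subst hs
      exact mem_bags_zp.2 rfl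
    · rw [mem_bags_cp] at h₁ h₂
      have hww : ∀ (u v : V), u ∈ Vp p → v ∈ Vp p →
          ∃ w : (trG G ch).Walk (Sum.inl u) (Sum.inl v), ∀ s ∈ w.support,
            (∃ x, s = Sum.inl x ∧ x ∈ Vp p) ∨ s = Sum.inr p := by
        intro u v hu hv
        obtain ⟨iw⟩ := (hconn p).preconnected ⟨u, by simpa using hu⟩ ⟨v, by simpa using hv⟩
        refine ⟨iw.map ⟨fun a => Sum.inl a.1, fun {a b} hab => trG_adj_inl_inl.2 hab⟩, ?_⟩
        intro s hsup
        rw [Walk.support_map] at hsup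
        obtain ⟨a, _, rfl⟩ := List.mem_map.mp hsup
        exact Or.inl ⟨a.1, rfl, by simpa using a.2⟩
      have hwalk : ∀ (a : V ⊕ P),
          ((∃ v, a = Sum.inl v ∧ v ∈ Vp p) ∨ a = Sum.inr p) →
          ∃ w : (trG G ch).Walk a (Sum.inr p), ∀ s ∈ w.support,
            (∃ v, s = Sum.inl v ∧ v ∈ Vp p) ∨ s = Sum.inr p := by
        rintro a (⟨v, rfl, hv⟩ | rfl)
        · obtain ⟨w0, hw0⟩ := hww v (ch p) hv (hch p)
          refine ⟨w0.concat (hpend p), ?_⟩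
          intro s hsup
          rw [Walk.support_concat] at hsup
          simp only [List.concat_eq_append, List.mem_append, List.mem_singleton] at hsup
          rcases hsup with hsup | hsup
          · exact hw0 s hsup
          · exact Or.inr hsup
        · refine ⟨Walk.nil, ?_⟩
          intro s hsup
          simp only [Walk.support_nil, List.mem_singleton] at hsup
          exact Or.inr hsup
      obtain ⟨w₁, hw₁⟩ := hwalk t₁ h₁
      obtain ⟨w₂, hw₂⟩ := hwalk t₂ h₂
      have hbp := (w₁.append w₂.reverse).bypass_isPath
      have huniq : ∃! q : (trG G ch).Walk t₁ t₂, q.IsPath :=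
        (isTree_iff_existsUnique_path.mp (trG_isTree hG)).2 t₁ t₂
      have hpeq : pth = (w₁.append w₂.reverse).bypass := huniq.unique hpth hbp
      have hsS : s ∈ (w₁.append w₂.reverse).support :=
        (w₁.append w₂.reverse).support_bypass_subset (hpeq ▸ hs)
      refine mem_bags_cp.2 ?_
      rcases (Walk.mem_support_append_iff w₁ w₂.reverse).mp hsS with hsup | hsup
      · exact hw₁ s hsup
      · rw [Walk.support_reverse, List.mem_reverse] at hsup
        exact hw₂ s hsup
  · -- card bound
    intro t
    show (bags Vp t).card ≤ Φ + 1
    cases t with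
    | inl v =>
      have h1 : (bags Vp (Sum.inl v)).card ≤
          ((Finset.univ.filter (fun p => v ∈ Vp p)).image
            (Sum.inr : P → (V ⊕ P) ⊕ P)).card + 1 := by
        simpa [bags] using Finset.card_insert_le (Sum.inl (Sum.inl v) : (V ⊕ P) ⊕ P)
          ((Finset.univ.filter (fun p => v ∈ Vp p)).image Sum.inr)
      have h2 := Finset.card_image_le (s := Finset.univ.filter (fun p => v ∈ Vp p))
        (f := (Sum.inr : P → (V ⊕ P) ⊕ P))
      have h3 := hfreq v
      omega
    | inr p =>
      have h1 : 1 ≤ Φ := by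
        have h2 := hfreq (ch p)
        have hpos : 0 < (Finset.univ.filter (fun q => ch p ∈ Vp q)).card :=
          Finset.card_pos.2 ⟨p, by simp [hch p]⟩
        omega
      have h2 : (bags Vp (Sum.inr p)).card ≤ 2 := by
        simp only [bags, Sum.elim_inr]
        exact (Finset.card_insert_le _ _).trans (by simp)
      omega
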